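/- Let Ω ⊆ ℝ^N be open, x₀ ∈ Ω, and u : Ω → ℝ^N differentiable at x₀. If e_u(x₀) = 1 and c_u(x₀) = 1 (equivalently r_u(x₀) = e_u(x₀) + c_u(x₀) = 2), then the derivative Du(x₀) is an orthogonal matrix, i.e., |Du(x₀)·v| = |v| for every v ∈ ℝ^N. -/

import Mathlib

open Filter Topology

/-- The pointwise expansion energy of `f` at `x` relative to `U`. -/
noncomputable def elipOn {E Y : Type*} [MetricSpace E] [MetricSpace Y]
    (f : E → Y) (U : Set E) (x : E) : ENNReal :=
  limsup (fun y => edist (f y) (f x) / edist y x) (𝓝[U \ {x}] x)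

/-- The pointwise contraction energy of `f` at `x` relative to `U`. -/
noncomputable def clipOn {E Y : Type*} [MetricSpace E] [MetricSpace Y]
    (f : E → Y) (U : Set E) (x : E) : ENNReal :=
  limsup (fun y => edist y x / edist (f y) (f x)) (𝓝[U \ {x}] x)

/-- If `u : Ω → ℝ^N` is differentiable at `x₀ ∈ Ω` and `e_u(x₀) = c_u(x₀) = 1`,
then the derivative `Du(x₀)` is an orthogonal matrix:
`|Du(x₀) v| = |v|` for every `v`. -/
theorem stmt11 {N : ℕ} (Ω : Set (EuclideanSpace ℝ (Fin N))) (hΩ : IsOpen Ω)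
    (x₀ : EuclideanSpace ℝ (Fin N)) (hx₀ : x₀ ∈ Ω)
    (u : EuclideanSpace ℝ (Fin N) → EuclideanSpace ℝ (Fin N))
    (A : EuclideanSpace ℝ (Fin N) →L[ℝ] EuclideanSpace ℝ (Fin N))
    (hdiff : HasFDerivAt u A x₀)
    (he : elipOn u Ω x₀ = 1) (hc : clipOn u Ω x₀ = 1) :
    ∀ v : EuclideanSpace ℝ (Fin N), ‖A v‖ = ‖v‖ := by
  unfold elipOn at he
  unfold clipOn at hc
  intro v
  rcases eq_or_ne v 0 with rfl | hv
  · simp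
  have hv' : (0:ℝ) < ‖v‖ := norm_pos_iff.mpr hv
  set φ : ℝ → EuclideanSpace ℝ (Fin N) := fun t => x₀ + t • v with hφdef
  have hφ0 : Tendsto φ (𝓝[>] (0:ℝ)) (𝓝 x₀) := by
    have h : Tendsto φ (𝓝 (0:ℝ)) (𝓝 (x₀ + (0:ℝ) • v)) :=
      (continuous_const.add (continuous_id.smul continuous_const)).tendsto 0
    simpa using h.mono_left nhdsWithin_le_nhds
  have hφne : ∀ t : ℝ, 0 < t → φ t ≠ x₀ := by
    intro t ht h
    have h0 : t • v = 0 := add_eq_left.mp h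
    rcases smul_eq_zero.mp h0 with h1 | h1
    · exact absurd h1 (ne_of_gt ht)
    · exact hv h1
  have hmem : ∀ᶠ t in 𝓝[>] (0:ℝ), φ t ∈ Ω \ {x₀} := by
    filter_upwards [hφ0.eventually (hΩ.eventually_mem hx₀), self_mem_nhdsWithin]
      with t ht ht0
    exact ⟨ht, hφne t ht0⟩
  have hle : Filter.map φ (𝓝[>] (0:ℝ)) ≤ 𝓝[Ω \ {x₀}] x₀ :=
    tendsto_nhdsWithin_iff.mpr ⟨hφ0, hmem⟩
  -- derivative along the line
  have hline : HasDerivAt φ v 0 := by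
    have h1 : HasDerivAt (fun t : ℝ => t • v) v 0 := by
      simpa using (hasDerivAt_id (0:ℝ)).smul_const v
    simpa [hφdef] using h1.const_add x₀
  have hcomp : HasDerivAt (fun t => u (φ t)) (A v) 0 := by
    have : φ 0 = x₀ := by simp [hφdef]
    exact (this ▸ hdiff : HasFDerivAt u A (φ 0)).comp_hasDerivAt 0 hline
  have hslope : Tendsto (fun t : ℝ => ‖u (φ t) - u (φ 0)‖ / |t|) (𝓝[≠] (0:ℝ))
      (𝓝 ‖A v‖) := by
    have h1 := hasDerivAt_iff_tendsto_slope.mp hcomp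
    have h2 := h1.norm
    refine h2.congr' ?_
    filter_upwards [self_mem_nhdsWithin] with t ht
    simp [slope_def_field, slope, norm_smul, abs_inv, div_eq_inv_mul]
  -- real-valued ratio tends to ‖A v‖ / ‖v‖
  have hreal : Tendsto (fun t : ℝ => ‖u (φ t) - u x₀‖ / (t * ‖v‖)) (𝓝[>] (0:ℝ))
      (𝓝 (‖A v‖ / ‖v‖)) := by
    have h0 : φ 0 = x₀ := by simp [hφdef]
    have h1 : Tendsto (fun t : ℝ => ‖u (φ t) - u x₀‖ / |t|) (𝓝[>] (0:ℝ)) (𝓝 ‖A v‖) := by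
      have := hslope.mono_left (nhdsWithin_mono _ (fun t (ht : t ∈ Set.Ioi (0:ℝ)) => ne_of_gt ht))
      simpa [h0] using this
    have h2 := h1.div_const ‖v‖
    refine h2.congr' ?_
    filter_upwards [self_mem_nhdsWithin] with t ht
    rw [abs_of_pos ht, div_div]
  set c : ENNReal := ENNReal.ofReal (‖A v‖ / ‖v‖) with hcdef
  have key : Tendsto (fun y => edist (u y) (u x₀) / edist y x₀) (Filter.map φ (𝓝[>] (0:ℝ)))
      (𝓝 c) := by
    rw [tendsto_map'_iff]
    have h1 : Tendsto (fun t => ENNReal.ofReal (‖u (φ t) - u x₀‖ / (t * ‖v‖)))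
        (𝓝[>] (0:ℝ)) (𝓝 c) := ENNReal.tendsto_ofReal hreal
    refine h1.congr' ?_
    filter_upwards [self_mem_nhdsWithin] with t ht
    have hd1 : edist (u (φ t)) (u x₀) = ENNReal.ofReal ‖u (φ t) - u x₀‖ := by
      rw [edist_dist, dist_eq_norm]
    have hd2 : edist (φ t) x₀ = ENNReal.ofReal (t * ‖v‖) := by
      rw [edist_dist, dist_eq_norm]
      simp [hφdef, norm_smul, abs_of_pos (show (0:ℝ) < t from ht), ENNReal.ofReal_mul (le_of_lt (show (0:ℝ) < t from ht))]
    simp only [Function.comp, hd1, hd2]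
    rw [ENNReal.ofReal_div_of_pos (mul_pos ht hv')]
  have hneBot : (Filter.map φ (𝓝[>] (0:ℝ))).NeBot := Filter.map_neBot
  have hcle : c ≤ 1 := by
    rw [← he, ← key.limsup_eq]
    exact Filter.limsup_le_limsup_of_le hle
  have key' : Tendsto (fun y => edist y x₀ / edist (u y) (u x₀)) (Filter.map φ (𝓝[>] (0:ℝ)))
      (𝓝 c⁻¹) := by
    refine key.inv.congr' ?_
    rw [Filter.eventuallyEq_iff_exists_mem]
    refine ⟨φ '' (Set.Ioi 0 ∩ Set.Ioo (-1) 1), ?_, ?_⟩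
    · exact Filter.image_mem_map (inter_mem self_mem_nhdsWithin
        (nhdsWithin_le_nhds (Ioo_mem_nhds (by norm_num) (by norm_num))))
    · rintro y ⟨t, ⟨ht, -⟩, rfl⟩
      have hne : edist (φ t) x₀ ≠ 0 :=
        fun h => hφne t ht (edist_eq_zero.mp h)
      exact ENNReal.inv_div (Or.inl (edist_ne_top _ _)) (Or.inl hne)
  have hcinv : c⁻¹ ≤ 1 := by
    rw [← hc, ← key'.limsup_eq]
    exact Filter.limsup_le_limsup_of_le hle
  have hc1 : c = 1 := le_antisymm hcle (ENNReal.inv_le_one.mp hcinv)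
  have : ‖A v‖ / ‖v‖ = 1 := by
    rwa [hcdef, ENNReal.ofReal_eq_one] at hc1
  field_simp at this
  exact this
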